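/- Let a ∈ ℤ and b ∈ ℕ with b ≥ 1 be relativelyely prime. Then for all real x > 0, |Σ_{1 ≤ m ≤ x} t_{a/b}(m)| ≤ b(b+1), where t_{a/b}(m) = 1 + 2b·β(am/b) and β(t) = t - ⌊t⌋ - 1/2. -/

import Mathlib

noncomputable def beta (t : ℝ) : ℝ := t - ⌊t⌋ - 1/2

lemma beta_eq_fract (t : ℝ) : beta t = Int.fract t - 1/2 := by
  unfold beta Int.fract; ring

theorem stmt_5 (a : ℤ) (b : ℕ) (hb : 1 ≤ b) (hab : Int.gcd a b = 1)
    (x : ℝ) (hx : 0 < x) :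
    |∑ m ∈ Finset.Icc 1 ⌊x⌋₊, (1 + 2 * (b : ℝ) * beta ((a : ℝ) * m / b))|
      ≤ b * (b + 1) := by
  have hb0 : (0:ℝ) < b := by exact_mod_cast hb
  set f : ℕ → ℝ := fun m => 1 + 2 * (b : ℝ) * beta ((a : ℝ) * m / b) with hf
  -- fract formula
  have hfrac : ∀ m : ℕ, Int.fract ((a:ℝ) * m / b) = ((a * m % b : ℤ) : ℝ) / b := by
    intro m
    have : ((a:ℝ) * m) = ((a * (m:ℤ) : ℤ) : ℝ) := by push_cast; ring
    rw [this, Int.fract_div_intCast_eq_div_intCast_mod]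
  -- periodicity
  have hper : ∀ m : ℕ, f (m + b) = f m := by
    intro m
    have : (a:ℝ) * (↑(m + b)) / b = (a:ℝ) * m / b + (a : ℤ) := by
      push_cast; field_simp
    simp only [hf, this, beta_eq_fract, Int.fract_add_intCast]
  -- pointwise bound
  have hbound : ∀ m : ℕ, |f m| ≤ (b:ℝ) + 1 := by
    intro m
    have h1 := Int.fract_nonneg ((a:ℝ) * m / b)
    have h2 := Int.fract_lt_one ((a:ℝ) * m / b)
    rw [hf]; simp only [beta_eq_fract]
    rw [abs_le]
    constructor <;> nlinarith
  -- sum over a period is zero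
  have hmods : ∑ m ∈ Finset.range b, ((a * m % b : ℤ) : ℝ) = ∑ r ∈ Finset.range b, (r : ℝ) := by
    have hinj : Set.InjOn (fun m : ℕ => (a * m % b : ℤ).toNat) (Finset.range b) := by
      intro m₁ hm₁ m₂ hm₂ h
      simp only [Finset.coe_range, Set.mem_Iio] at hm₁ hm₂
      have hb0' : (0:ℤ) < b := by exact_mod_cast hb
      have h' : (a * m₁ % b : ℤ).toNat = (a * m₂ % b : ℤ).toNat := h
      have e : (a * m₁ % b : ℤ) = a * m₂ % b := by
        have n1 : (0:ℤ) ≤ a * m₁ % b := Int.emod_nonneg _ hb0'.ne'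
        have n2 : (0:ℤ) ≤ a * m₂ % b := Int.emod_nonneg _ hb0'.ne'
        omega
      have hmod : a * (m₁:ℤ) ≡ a * m₂ [ZMOD b] := by
        simpa [Int.ModEq] using e
      have hg : Int.gcd (b:ℤ) a = 1 := by rw [Int.gcd_comm]; exact hab
      have hcan := Int.ModEq.cancel_left_div_gcd hb0' hmod
      rw [hg] at hcan
      simp only [Nat.cast_one, Int.ediv_one] at hcan
      have h1 : (m₁ : ℤ) % b = (m₂ : ℤ) % b := hcan
      rw [Int.emod_eq_of_lt (by positivity) (by exact_mod_cast hm₁),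
        Int.emod_eq_of_lt (by positivity) (by exact_mod_cast hm₂)] at h1
      exact_mod_cast h1
    have hmaps : ∀ m ∈ Finset.range b, (a * m % b : ℤ).toNat ∈ Finset.range b := by
      intro m _
      have hb0' : (0:ℤ) < b := by exact_mod_cast hb
      have := Int.emod_lt_of_pos (a * m) hb0'
      have := Int.emod_nonneg (a * (m:ℤ)) hb0'.ne'
      simp only [Finset.mem_range]; omega
    have himg : Finset.image (fun m : ℕ => (a * m % b : ℤ).toNat) (Finset.range b)
        = Finset.range b := by
      apply Finset.eq_of_subset_of_card_le
      · intro r hr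
        simp only [Finset.mem_image] at hr
        obtain ⟨m, hm, rfl⟩ := hr
        exact hmaps m hm
      · rw [Finset.card_image_of_injOn hinj]
    calc ∑ m ∈ Finset.range b, ((a * m % b : ℤ) : ℝ)
        = ∑ m ∈ Finset.range b, (((a * m % b : ℤ).toNat : ℕ) : ℝ) := by
          apply Finset.sum_congr rfl
          intro m _
          have hb0' : (0:ℤ) < b := by exact_mod_cast hb
          have hnn := Int.emod_nonneg (a * (m:ℤ)) hb0'.ne'
          exact_mod_cast (Int.toNat_of_nonneg hnn).symm
      _ = ∑ r ∈ Finset.image (fun m : ℕ => (a * m % b : ℤ).toNat) (Finset.range b), (r:ℝ) :=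
          (Finset.sum_image (fun x hx y hy h => hinj hx hy h)).symm
      _ = ∑ r ∈ Finset.range b, (r : ℝ) := by rw [himg]
  have hperiod0 : ∑ m ∈ Finset.range b, f m = 0 := by
    have hgauss : ∑ r ∈ Finset.range b, (r : ℝ) = b * (b - 1) / 2 := by
      have h := congrArg (Nat.cast : ℕ → ℝ) (Finset.sum_range_id_mul_two b)
      push_cast [Nat.cast_sub hb] at h
      linarith
    have : ∑ m ∈ Finset.range b, f m
        = ∑ m ∈ Finset.range b, (1 - (b:ℝ) + 2 * ((a * m % b : ℤ) : ℝ)) := by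
      apply Finset.sum_congr rfl
      intro m _
      rw [hf]; simp only [beta_eq_fract, hfrac m]
      field_simp; ring
    rw [this, Finset.sum_add_distrib, Finset.sum_const, ← Finset.mul_sum, hmods, hgauss]
    simp only [nsmul_eq_mul, Finset.card_range]
    ring
  -- sum over any b consecutive integers is zero
  have hchunk : ∀ N : ℕ, ∑ m ∈ Finset.range b, f (N + m) = 0 := by
    intro N
    induction N with
    | zero => simpa using hperiod0
    | succ N ih =>
      have h1 : ∑ m ∈ Finset.range b, f (N + 1 + m) = ∑ m ∈ Finset.range b, f (N + (m+1)) := by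
        apply Finset.sum_congr rfl; intro m _; ring_nf
      have h2 : ∑ m ∈ Finset.range (b+1), f (N + m)
          = ∑ m ∈ Finset.range b, f (N + (m+1)) + f (N + 0) := Finset.sum_range_succ' _ _
      have h3 : ∑ m ∈ Finset.range (b+1), f (N + m)
          = ∑ m ∈ Finset.range b, f (N + m) + f (N + b) := Finset.sum_range_succ _ _
      have h4 : f (N + b) = f (N + 0) := by simpa using hper N
      rw [h1]
      have := h2.symm.trans h3
      linarith [ih]
  -- shift lemma for S
  set S : ℕ → ℝ := fun N => ∑ m ∈ Finset.Ioc 0 N, f m with hS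
  have hshift : ∀ N : ℕ, S (N + b) = S N := by
    intro N
    have hsplit : ∑ m ∈ Finset.Ioc 0 N, f m + ∑ m ∈ Finset.Ioc N (N+b), f m
        = ∑ m ∈ Finset.Ioc 0 (N+b), f m :=
      Finset.sum_Ioc_consecutive _ (Nat.zero_le N) (Nat.le_add_right N b)
    have hIoc : ∑ m ∈ Finset.Ioc N (N+b), f m = ∑ m ∈ Finset.range b, f (N + 1 + m) := by
      rw [show Finset.Ioc N (N+b) = Finset.Ico (N+1) (N+1+b) by
        ext m; simp only [Finset.mem_Ioc, Finset.mem_Ico]; omega]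
      rw [Finset.sum_Ico_eq_sum_range]
      simp
    rw [hS]
    simp only
    rw [← hsplit, hIoc, hchunk (N+1), add_zero]
  have hredu : ∀ q r : ℕ, S (r + q * b) = S r := by
    intro q
    induction q with
    | zero => simp
    | succ q ih => intro r; rw [show r + (q+1)*b = (r + q*b) + b by ring, hshift, ih]
  -- conclude
  have hmain : ∀ N : ℕ, |S N| ≤ (b:ℝ) * (b+1) := by
    intro N
    have hN : N = N % b + (N / b) * b := by
      rw [Nat.mul_comm, Nat.mod_add_div]
    rw [hN, hredu]
    have h1 : |S (N % b)| ≤ ∑ m ∈ Finset.Ioc 0 (N % b), |f m| := Finset.abs_sum_le_sum_abs _ _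
    have h2 : ∑ m ∈ Finset.Ioc 0 (N % b), |f m|
        ≤ (Finset.Ioc 0 (N % b)).card • ((b:ℝ) + 1) :=
      Finset.sum_le_card_nsmul _ _ _ (fun m _ => hbound m)
    have hcard : (Finset.Ioc 0 (N % b)).card = N % b := by simp
    have hlt : N % b < b := Nat.mod_lt _ hb
    have : ((N % b : ℕ) : ℝ) ≤ (b:ℝ) := by exact_mod_cast hlt.le
    calc |S (N % b)| ≤ (Finset.Ioc 0 (N % b)).card • ((b:ℝ) + 1) := h1.trans h2
      _ = ((N % b : ℕ) : ℝ) * ((b:ℝ)+1) := by rw [hcard, nsmul_eq_mul]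
      _ ≤ (b:ℝ) * ((b:ℝ)+1) := by nlinarith
  have : Finset.Icc 1 ⌊x⌋₊ = Finset.Ioc 0 ⌊x⌋₊ := by
    rw [← Finset.Icc_add_one_left_eq_Ioc, zero_add]
  rw [this]
  exact_mod_cast hmain ⌊x⌋₊
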